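/- arXiv:2011.12464 — 3 statements merged into one kernel-verified Lean document; each statement's English description precedes it below -/
import Mathlib

section
/- Let D₁ and D₂ be bounded, balanced, convex open subsets of ℂⁿ (respectively ℂᵐ), and let f : D₁ → D₂ be a holomorphic map with f(0) = 0. Then for every 0 < r ≤ 1, f maps r·D₁ into r·D₂, i.e., f(rD₁) ⊆ rD₂. -/
open Set Metric Pointwise

noncomputable section

/-- Inverse hyperbolic tangent. -/
def artanh (x : ℝ) : ℝ := (1/2) * Real.log ((1 + x) / (1 - x))

/-- Poincaré distance on the unit disk. -/
def poincare (a b : ℂ) : ℝ := artanh ‖(a - b) / (1 - (starRingEnd ℂ) a * b)‖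

variable {E : Type*} [NormedAddCommGroup E] [NormedSpace ℂ E]

/-- The Lempert function of a domain `D`. -/
def lempert (D : Set E) (z w : E) : ℝ :=
  sInf { r | ∃ (φ : ℂ → E) (α : ℂ), DifferentiableOn ℂ φ (ball 0 1) ∧
    MapsTo φ (ball 0 1) D ∧ φ 0 = z ∧ α ∈ ball (0:ℂ) 1 ∧ φ α = w ∧
    r = artanh ‖α‖ }

/-- The Kobayashi pseudodistance of a domain `D`, as the infimum over chains of
analytic disks of the sum of the corresponding Poincaré lengths. -/
def kobayashi (D : Set E) (z w : E) : ℝ :=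
  sInf { s | ∃ (n : ℕ) (p : ℕ → E), p 0 = z ∧ p n = w ∧ (∀ i ≤ n, p i ∈ D) ∧
    s = ∑ i ∈ Finset.range n, lempert D (p i) (p (i+1)) }

/-- The Kobayashi ball of radius `r` centered at `z` in `D`. -/
def kobayashiBall (D : Set E) (z : E) (r : ℝ) : Set E := { w ∈ D | kobayashi D z w < r }

/-- The Carathéodory pseudodistance of a domain `D`. -/
def caratheodory (D : Set E) (z w : E) : ℝ :=
  sSup { r | ∃ f : E → ℂ, DifferentiableOn ℂ f D ∧ MapsTo f D (ball 0 1) ∧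
    r = poincare (f z) (f w) }

/-- The Carathéodory ball of radius `r` centered at `z` in `D`. -/
def caratheodoryBall (D : Set E) (z : E) (r : ℝ) : Set E := { w ∈ D | caratheodory D z w < r }

/-- The squeezing function of a domain `D ⊆ E` (with respect to the unit ball of `E`). -/
def squeezing (D : Set E) (z : E) : ℝ :=
  sSup { r | ∃ f : E → E, DifferentiableOn ℂ f D ∧ InjOn f D ∧ MapsTo f D (ball 0 1) ∧
    f z = 0 ∧ ball (0:E) r ⊆ f '' D }

/-- The Fridman invariant of a domain `D ⊆ E` (with respect to the unit ball of `E`). -/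
def fridman (D : Set E) (z : E) : ℝ :=
  sSup { t | ∃ r > (0:ℝ), ∃ f : E → E, DifferentiableOn ℂ f (ball 0 1) ∧
    InjOn f (ball 0 1) ∧ MapsTo f (ball 0 1) D ∧ f 0 = z ∧
    kobayashiBall D z r ⊆ f '' (ball 0 1) ∧ t = Real.tanh r }

/-- The Fridman invariant defined via Carathéodory balls. -/
def fridmanC (D : Set E) (z : E) : ℝ :=
  sSup { t | ∃ r > (0:ℝ), ∃ f : E → E, DifferentiableOn ℂ f (ball 0 1) ∧
    InjOn f (ball 0 1) ∧ MapsTo f (ball 0 1) D ∧ f 0 = z ∧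
    caratheodoryBall D z r ⊆ f '' (ball 0 1) ∧ t = Real.tanh r }

/-- A set is balanced if `λ • z ∈ D` whenever `z ∈ D` and `|λ| ≤ 1`. -/
def IsBalanced (D : Set E) : Prop := ∀ z ∈ D, ∀ l : ℂ, ‖l‖ ≤ 1 → l • z ∈ D

/-- The Minkowski function of a (balanced) domain. -/
def minkowski (D : Set E) (z : E) : ℝ := sInf { t : ℝ | 0 < t ∧ (t⁻¹ : ℂ) • z ∈ D }

/-- `D` is homogeneous: its automorphism group acts transitively. -/
def IsHomogeneous (D : Set E) : Prop :=
  ∀ z ∈ D, ∀ w ∈ D, ∃ f g : E → E, DifferentiableOn ℂ f D ∧ DifferentiableOn ℂ g D ∧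
    MapsTo f D D ∧ MapsTo g D D ∧ (∀ x ∈ D, g (f x) = x) ∧ (∀ x ∈ D, f (g x) = x) ∧ f z = w

/-- `D` is completely hyperbolic: the Kobayashi pseudodistance is a distance and every
Kobayashi-Cauchy sequence in `D` converges (in the Kobayashi distance) to a point of `D`. -/
def IsCompletelyHyperbolic (D : Set E) : Prop :=
  (∀ z ∈ D, ∀ w ∈ D, kobayashi D z w = 0 → z = w) ∧
  (∀ u : ℕ → E, (∀ n, u n ∈ D) →
    (∀ ε > (0:ℝ), ∃ N, ∀ m ≥ N, ∀ n ≥ N, kobayashi D (u m) (u n) < ε) →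
    ∃ x ∈ D, Filter.Tendsto (fun n => kobayashi D (u n) x) Filter.atTop (nhds 0))

/-- The punctured unit disk in `ℂ`. -/
def puncturedDisk : Set ℂ := ball 0 1 \ {0}

end

open Set Metric Pointwise

set_option maxHeartbeats 1000000 in
theorem my_schwarz_aux {n m : ℕ}
    (D₁ : Set (EuclideanSpace ℂ (Fin n))) (D₂ : Set (EuclideanSpace ℂ (Fin m)))
    (h₁o : IsOpen D₁) (h₁b : Bornology.IsBounded D₁) (h₁bal : IsBalanced D₁)
    (h₁c : Convex ℝ D₁)
    (h₂o : IsOpen D₂) (h₂b : Bornology.IsBounded D₂) (h₂bal : IsBalanced D₂)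
    (h₂c : Convex ℝ D₂)
    (f : EuclideanSpace ℂ (Fin n) → EuclideanSpace ℂ (Fin m))
    (hf : DifferentiableOn ℂ f D₁) (hmap : MapsTo f D₁ D₂) (hf0 : f 0 = 0)
    (r : ℝ) (hr0 : 0 < r) (hr1 : r ≤ 1) :
    f '' ((r : ℂ) • D₁) ⊆ (r : ℂ) • D₂ := by
  rintro - ⟨-, ⟨z₀, hz₀, rfl⟩, rfl⟩
  -- goal: f ((r:ℂ) • z₀) ∈ (r:ℂ) • D₂
  by_contra hx
  set x := f ((r : ℂ) • z₀) with hxdef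
  -- 0 ∈ D₁, 0 ∈ D₂
  have h0₁ : (0 : EuclideanSpace ℂ (Fin n)) ∈ D₁ := by
    simpa using h₁bal z₀ hz₀ 0 (by simp)
  have h0₂ : (0 : EuclideanSpace ℂ (Fin m)) ∈ D₂ := hf0 ▸ hmap h0₁
  -- rD₂ is open and convex
  have hrne : (r : ℂ) ≠ 0 := by exact_mod_cast hr0.ne'
  have hsopen : IsOpen ((r : ℂ) • D₂) := h₂o.smul₀ hrne
  have hsconv : Convex ℝ ((r : ℂ) • D₂) := by
    have : (r : ℂ) • D₂ = r • D₂ := by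
      ext w
      constructor
      · rintro ⟨a, ha, rfl⟩; exact ⟨a, ha, by simp [Complex.coe_smul]⟩
      · rintro ⟨a, ha, rfl⟩; exact ⟨a, ha, by simp [Complex.coe_smul]⟩
    rw [this]
    exact h₂c.smul r
  obtain ⟨g, hg⟩ := geometric_hahn_banach_open_point hsconv hsopen hx
  -- g x > 0
  have hgx : 0 < g x := by
    have := hg 0 ⟨0, h0₂, by simp⟩
    simpa using this
  -- complexify
  set L : EuclideanSpace ℂ (Fin m) →L[ℂ] ℂ := g.extendTo𝕜'
  have hLre : ∀ w, (L w).re = g w := by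
    intro w
    exact StrongDual.re_extendRCLike_apply (𝕜 := ℂ) g w
  -- |L b| < g x / r for b ∈ D₂
  have hLbound : ∀ b ∈ D₂, ‖L b‖ < g x / r := by
    intro b hb
    rcases eq_or_ne (L b) 0 with h | h
    · rw [h]; simpa using div_pos hgx hr0
    · set c : ℂ := (starRingEnd ℂ) (L b) / ‖L b‖ with hc
      have habs : ‖c‖ = 1 := by
        have : ‖L b‖ ≠ 0 := norm_ne_zero_iff.2 h
        rw [hc, norm_div, Complex.norm_conj, Complex.norm_real, norm_norm, div_self this]
      have hcb : c • b ∈ D₂ := h₂bal b hb c habs.le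
      have hLcb : L (c • b) = (‖L b‖ : ℂ) := by
        rw [map_smul, smul_eq_mul, hc]
        rw [div_mul_eq_mul_div, Complex.conj_mul']
        have hne : ‖L b‖ ≠ 0 := norm_ne_zero_iff.2 h
        push_cast
        rw [sq]
        field_simp
      have : g (c • b) = ‖L b‖ := by
        have := hLre (c • b)
        rw [hLcb] at this
        simpa using this.symm
      have hmem : (r : ℂ) • (c • b) ∈ (r : ℂ) • D₂ := ⟨c • b, hcb, rfl⟩
      have := hg _ hmem
      have hsm : g ((r : ℂ) • c • b) = r * g (c • b) := by
        rw [show (r : ℂ) • c • b = r • c • b from Complex.coe_smul r _, map_smul, smul_eq_mul]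
      rw [hsm] at this
      rw [‹g (c • b) = ‖L b‖›] at this
      exact (lt_div_iff₀' hr0).2 this
  -- choose s > 1 with s • z₀ ∈ D₁
  have hU : IsOpen {s : ℝ | s • z₀ ∈ D₁} := h₁o.preimage (by continuity)
  obtain ⟨δ, hδ, hball⟩ := Metric.isOpen_iff.1 hU 1 (by simpa using hz₀)
  set s : ℝ := 1 + δ / 2 with hs
  have hs1 : 1 < s := by simp [hs]; positivity
  have hsz : s • z₀ ∈ D₁ := hball (by simp [hs, Real.dist_eq, abs_of_nonneg hδ.le]; linarith)
  set w₁ : EuclideanSpace ℂ (Fin n) := (s : ℂ) • z₀ with hw₁def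
  have hw₁ : w₁ ∈ D₁ := by rwa [hw₁def, Complex.coe_smul]
  set t : ℝ := s⁻¹ with ht
  have ht0 : 0 < t := by positivity
  have ht1 : t < 1 := by rw [ht]; exact inv_lt_one_of_one_lt₀ hs1
  -- the holomorphic function on the disk
  set h : ℂ → ℂ := fun μ => ((r / g x : ℝ) : ℂ) * L (f (μ • w₁)) with hhdef
  have hmapsφ : ∀ μ ∈ ball (0 : ℂ) 1, μ • w₁ ∈ D₁ := by
    intro μ hμ
    exact h₁bal w₁ hw₁ μ (by simpa using (mem_ball_zero_iff.1 hμ).le)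
  have hd : DifferentiableOn ℂ h (ball 0 1) := by
    apply DifferentiableOn.const_mul
    apply L.differentiable.comp_differentiableOn
    exact hf.comp ((differentiable_id.smul_const w₁).differentiableOn) hmapsφ
  have hmaps : MapsTo h (ball 0 1) (ball 0 1) := by
    intro μ hμ
    have hfD : f (μ • w₁) ∈ D₂ := hmap (hmapsφ μ hμ)
    have := hLbound _ hfD
    rw [mem_ball_zero_iff]
    have hpos : 0 < r / g x := div_pos hr0 hgx
    calc ‖h μ‖ = (r / g x) * ‖L (f (μ • w₁))‖ := by
          rw [hhdef]
          simp only [norm_mul, Complex.norm_real, Real.norm_eq_abs]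
          rw [abs_of_pos hpos]
      _ < (r / g x) * (g x / r) := by exact mul_lt_mul_of_pos_left this hpos
      _ = 1 := by field_simp
  have hh0 : h 0 = 0 := by simp [hhdef, hf0]
  have hrt : ‖(((r * t : ℝ) : ℂ))‖ < 1 := by
    rw [Complex.norm_real, Real.norm_eq_abs, abs_of_pos (by positivity)]
    calc r * t ≤ 1 * t := by nlinarith
      _ < 1 := by linarith
  have hschwarz := Complex.norm_le_norm_of_mapsTo_ball hd (hmaps.mono_right ball_subset_closedBall) hh0 hrt
  -- compute h (r * t)
  have hkey : ((r * t : ℝ) : ℂ) • w₁ = (r : ℂ) • z₀ := by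
    rw [hw₁def, smul_smul, ← Complex.ofReal_mul]
    congr 1
    rw [mul_assoc, ht, inv_mul_cancel₀ (by positivity), mul_one]
  have hval : h ((r * t : ℝ) : ℂ) = ((r / g x : ℝ) : ℂ) * L x := by
    rw [hhdef]
    simp only [hkey, hxdef]
  have hre : (h ((r * t : ℝ) : ℂ)).re = r := by
    rw [hval]
    have : (L x).re = g x := hLre x
    rw [Complex.mul_re]
    simp only [Complex.ofReal_re, Complex.ofReal_im, this, zero_mul, sub_zero]
    field_simp
  have hle : r ≤ ‖h ((r * t : ℝ) : ℂ)‖ := 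
    calc r = (h ((r * t : ℝ) : ℂ)).re := hre.symm
      _ ≤ ‖h ((r * t : ℝ) : ℂ)‖ := Complex.re_le_norm _
  have : ‖(((r * t : ℝ) : ℂ))‖ = r * t := by
    rw [Complex.norm_real, Real.norm_eq_abs, abs_of_pos (by positivity)]
  rw [this] at hschwarz
  have : r * t < r := by nlinarith
  linarith

/-- Schwarz lemma: a holomorphic map between bounded balanced convex domains fixing the
origin maps `r·D₁` into `r·D₂` for `0 < r ≤ 1`. -/
theorem schwarz_balanced_convex {n m : ℕ}
    (D₁ : Set (EuclideanSpace ℂ (Fin n))) (D₂ : Set (EuclideanSpace ℂ (Fin m)))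
    (h₁o : IsOpen D₁) (h₁b : Bornology.IsBounded D₁) (h₁bal : IsBalanced D₁)
    (h₁c : Convex ℝ D₁)
    (h₂o : IsOpen D₂) (h₂b : Bornology.IsBounded D₂) (h₂bal : IsBalanced D₂)
    (h₂c : Convex ℝ D₂)
    (f : EuclideanSpace ℂ (Fin n) → EuclideanSpace ℂ (Fin m))
    (hf : DifferentiableOn ℂ f D₁) (hmap : MapsTo f D₁ D₂) (hf0 : f 0 = 0)
    (r : ℝ) (hr0 : 0 < r) (hr1 : r ≤ 1) :
    f '' ((r : ℂ) • D₁) ⊆ (r : ℂ) • D₂ :=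
  my_schwarz_aux D₁ D₂ h₁o h₁b h₁bal h₁c h₂o h₂b h₂bal h₂c f hf hmap hf0 r hr0 hr1
end

section
/- Let D be a bounded, balanced, convex domain in ℂⁿ with Minkowski function l_D. Then for every z ∈ D, tanh(k_D(0, z)) = l_D(z), where k_D is the Kobayashi distance on D. -/
open Set Metric

open Set Metric


section Auxiliary
open Set Metric

lemma artanh_nonneg {x : ℝ} (h0 : 0 ≤ x) (h1 : x < 1) : 0 ≤ artanh x := by
  have h2 : (1:ℝ) ≤ (1 + x) / (1 - x) := by
    rw [le_div_iff₀ (by linarith)]; linarith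
  have := Real.log_nonneg h2
  unfold artanh; linarith

lemma artanh_zero : artanh 0 = 0 := by simp [artanh]

lemma artanh_le_artanh {x y : ℝ} (h0 : 0 ≤ x) (hxy : x ≤ y) (h1 : y < 1) :
    artanh x ≤ artanh y := by
  have hx1 : x < 1 := lt_of_le_of_lt hxy h1
  have h2 : (1 + x) / (1 - x) ≤ (1 + y) / (1 - y) := by
    rw [div_le_div_iff₀ (by linarith) (by linarith)]; nlinarith
  have hpos : (0:ℝ) < (1 + x) / (1 - x) := div_pos (by linarith) (by linarith)
  have := Real.log_le_log hpos h2
  unfold artanh; linarith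

lemma tanh_artanh {x : ℝ} (h0 : 0 ≤ x) (h1 : x < 1) : Real.tanh (artanh x) = x := by
  have hu : (0:ℝ) < (1 + x) / (1 - x) := div_pos (by linarith) (by linarith)
  set y := artanh x with hy
  have h2y : 2 * y = Real.log ((1 + x) / (1 - x)) := by rw [hy]; unfold artanh; ring
  have hexp : Real.exp (2 * y) = (1 + x) / (1 - x) := by rw [h2y, Real.exp_log hu]
  rw [Real.tanh_eq_sinh_div_cosh, Real.sinh_eq, Real.cosh_eq]
  have hE : Real.exp y > 0 := Real.exp_pos y
  have hE2 : Real.exp y * Real.exp y = (1 + x) / (1 - x) := by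
    rw [← Real.exp_add]; rw [show y + y = 2 * y by ring, hexp]
  have hE3 : Real.exp y * Real.exp y * (1 - x) = 1 + x := by
    rw [hE2, div_mul_cancel₀ _ (by linarith : (1:ℝ) - x ≠ 0)]
  have hne : Real.exp (-y) = 1 / Real.exp y := by
    rw [Real.exp_neg]; exact inv_eq_one_div _
  rw [hne]
  have h4 : Real.exp y + 1 / Real.exp y > 0 := by positivity
  field_simp
  nlinarith [hE3, hE]

lemma tanh_mono : Monotone Real.tanh := by
  intro x y hxy
  have hx := Real.cosh_pos x
  have hy := Real.cosh_pos y
  have h1 : Real.tanh y - Real.tanh x = Real.sinh (y - x) / (Real.cosh y * Real.cosh x) := by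
    rw [Real.tanh_eq_sinh_div_cosh, Real.tanh_eq_sinh_div_cosh,
      div_sub_div _ _ hy.ne' hx.ne', Real.sinh_sub]
  have h2 : 0 ≤ Real.sinh (y - x) := Real.sinh_nonneg_iff.mpr (by linarith)
  have h3 : (0:ℝ) < Real.cosh y * Real.cosh x := mul_pos hy hx
  nlinarith [div_nonneg h2 h3.le]

lemma artanh_add {a b : ℝ} (ha0 : 0 ≤ a) (ha1 : a < 1) (hb0 : 0 ≤ b) (hb1 : b < 1) :
    artanh a + artanh b = artanh ((a + b) / (1 + a * b)) := by
  have hab : (0:ℝ) < 1 + a * b := by nlinarith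
  set w := (a + b) / (1 + a * b) with hw
  have h1w : 1 + w = (1 + a) * (1 + b) / (1 + a * b) := by
    rw [hw]; field_simp; ring
  have h2w : 1 - w = (1 - a) * (1 - b) / (1 + a * b) := by
    rw [hw]; field_simp; ring
  have hq : (1 + w) / (1 - w) = ((1 + a) / (1 - a)) * ((1 + b) / (1 - b)) := by
    have h1a : (1:ℝ) - a ≠ 0 := by linarith
    have h1b : (1:ℝ) - b ≠ 0 := by linarith
    rw [h1w, h2w]
    field_simp
  unfold artanh
  rw [hq, Real.log_mul (div_pos (by linarith) (by linarith)).ne'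
    (div_pos (by linarith) (by linarith)).ne']
  ring
lemma normSq_mobius_identity (a w : ℂ) :
    Complex.normSq (1 - (starRingEnd ℂ) a * w) - Complex.normSq (w - a)
      = (1 - Complex.normSq a) * (1 - Complex.normSq w) := by
  have h1 : ∀ z : ℂ, (Complex.normSq z : ℂ) = z * (starRingEnd ℂ) z :=
    fun z => (Complex.mul_conj z).symm
  have key : ((Complex.normSq (1 - (starRingEnd ℂ) a * w) - Complex.normSq (w - a) : ℝ) : ℂ)
      = (((1 - Complex.normSq a) * (1 - Complex.normSq w) : ℝ) : ℂ) := by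
    push_cast
    rw [h1, h1, h1, h1]
    simp only [map_sub, map_mul, map_one, Complex.conj_conj]
    ring
  exact_mod_cast key

set_option maxHeartbeats 800000 in
lemma schwarz_pick_link {g : ℂ → ℂ} (hd : DifferentiableOn ℂ g (ball 0 1))
    (hm : MapsTo g (ball 0 1) (ball 0 1)) {α : ℂ} (hα : α ∈ ball (0:ℂ) 1) :
    artanh (‖g α‖) ≤ artanh (‖g 0‖) + artanh (‖α‖) := by
  have h0mem : (0:ℂ) ∈ ball (0:ℂ) 1 := mem_ball_self one_pos
  obtain ⟨a, ha_def⟩ : ∃ a, g 0 = a := ⟨g 0, rfl⟩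
  have ha : ‖a‖ < 1 := by
    have := hm h0mem; rwa [mem_ball_zero_iff, ha_def] at this
  have haa : Complex.normSq a < 1 := by
    rw [← Complex.sq_norm]; nlinarith [norm_nonneg a]
  have hden : ∀ w : ℂ, ‖w‖ < 1 → (1 - (starRingEnd ℂ) a * w) ≠ 0 := by
    intro w hw
    have hww : Complex.normSq w < 1 := by
      rw [← Complex.sq_norm]; nlinarith [norm_nonneg w]
    have hid := normSq_mobius_identity a w
    have hpos : 0 < Complex.normSq (1 - (starRingEnd ℂ) a * w) := by
      nlinarith [Complex.normSq_nonneg (w - a)]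
    exact fun hc => by rw [hc] at hpos; simp at hpos
  set h : ℂ → ℂ := fun l => (g l - a) / (1 - (starRingEnd ℂ) a * g l) with hh
  have hball : ∀ w : ℂ, ‖w‖ < 1 →
      ‖(w - a) / (1 - (starRingEnd ℂ) a * w)‖ < 1 := by
    intro w hw
    have hww : Complex.normSq w < 1 := by
      rw [← Complex.sq_norm]; nlinarith [norm_nonneg w]
    have hid := normSq_mobius_identity a w
    have hpos : 0 < Complex.normSq (1 - (starRingEnd ℂ) a * w) := by
      nlinarith [Complex.normSq_nonneg (w - a)]
    rw [norm_div, div_lt_one (norm_pos_iff.mpr (hden w hw))]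
    have hlt : Complex.normSq (w - a) < Complex.normSq (1 - (starRingEnd ℂ) a * w) := by
      nlinarith
    rw [← Complex.sq_norm, ← Complex.sq_norm] at hlt
    nlinarith [norm_nonneg (w - a), norm_nonneg (1 - (starRingEnd ℂ) a * w)]
  have hd' : DifferentiableOn ℂ h (ball 0 1) := by
    apply DifferentiableOn.div (hd.sub (differentiableOn_const a))
      ((differentiableOn_const 1).sub ((differentiableOn_const _).mul hd))
    intro x hx
    exact hden (g x) (by have := hm hx; rwa [mem_ball_zero_iff] at this)
  have hm' : MapsTo h (ball 0 1) (ball 0 1) := by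
    intro x hx
    rw [mem_ball_zero_iff]
    exact hball (g x) (by have := hm hx; rwa [mem_ball_zero_iff] at this)
  have h0 : h 0 = 0 := by simp [hh, ha_def]
  have hαlt : ‖α‖ < 1 := by rwa [mem_ball_zero_iff] at hα
  have hsch : ‖h α‖ ≤ ‖α‖ :=
    Complex.norm_le_norm_of_mapsTo_ball hd' (hm'.mono_right ball_subset_closedBall) h0 hαlt
  obtain ⟨v, hv⟩ : ∃ v, h α = v := ⟨h α, rfl⟩
  rw [hv] at hsch
  have hgα : ‖g α‖ < 1 := by
    have := hm hα; rwa [mem_ball_zero_iff] at this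
  have hdg : (1 - (starRingEnd ℂ) a * g α) ≠ 0 := hden _ hgα
  have hs1 : ‖v‖ < 1 := lt_of_le_of_lt hsch hαlt
  have hvd : (1 + (starRingEnd ℂ) a * v) ≠ 0 := by
    have hva : ‖(starRingEnd ℂ) a * v‖ < 1 := by
      rw [norm_mul, Complex.norm_conj]
      nlinarith [norm_nonneg a, norm_nonneg v]
    intro hc
    have h2 : (starRingEnd ℂ) a * v = -1 := eq_neg_of_add_eq_zero_right hc
    rw [h2] at hva; simp at hva
  have hveq : v * (1 - (starRingEnd ℂ) a * g α) = g α - a := by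
    rw [← hv, hh]; field_simp
    exact mul_div_cancel_right₀ _ (by rw [mul_comm]; exact hdg)
  have hrepr : g α = (v + a) / (1 + (starRingEnd ℂ) a * v) := by
    rw [eq_div_iff hvd]; linear_combination -hveq
  set r := ‖a‖ with hr
  set s := ‖v‖ with hs
  have hr0 : 0 ≤ r := norm_nonneg a
  have hs0 : 0 ≤ s := norm_nonneg v
  have hcross : ((1:ℂ) * (starRingEnd ℂ) ((starRingEnd ℂ) a * v)).re
      = (v * (starRingEnd ℂ) a).re := by
    rw [one_mul, map_mul, Complex.conj_conj]
    calc (a * (starRingEnd ℂ) v).re = ((starRingEnd ℂ) (v * (starRingEnd ℂ) a)).re := by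
          rw [map_mul, Complex.conj_conj, mul_comm]
      _ = (v * (starRingEnd ℂ) a).re := Complex.conj_re _
  have ht : (v * (starRingEnd ℂ) a).re ≤ s * r := by
    calc (v * (starRingEnd ℂ) a).re ≤ ‖v * (starRingEnd ℂ) a‖ := Complex.re_le_norm _
      _ = s * r := by rw [norm_mul, Complex.norm_conj]
  have e1 : Complex.normSq (v + a) = s ^ 2 + r ^ 2 + 2 * (v * (starRingEnd ℂ) a).re := by
    rw [hs, hr, Complex.normSq_add, Complex.sq_norm, Complex.sq_norm]
  have e2 : Complex.normSq (1 + (starRingEnd ℂ) a * v)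
      = 1 + r ^ 2 * s ^ 2 + 2 * (v * (starRingEnd ℂ) a).re := by
    rw [hs, hr, Complex.normSq_add, Complex.normSq_mul, Complex.normSq_conj,
      Complex.normSq_one, Complex.sq_norm, Complex.sq_norm, hcross]
  have key : Complex.normSq (v + a) * (1 + s * r) ^ 2
      ≤ (s + r) ^ 2 * Complex.normSq (1 + (starRingEnd ℂ) a * v) := by
    rw [e1, e2]
    nlinarith [mul_nonneg (mul_nonneg (sub_nonneg.mpr ht)
      (by nlinarith : (0:ℝ) ≤ 1 - r ^ 2)) (by nlinarith : (0:ℝ) ≤ 1 - s ^ 2)]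
  have hbound : ‖g α‖ ≤ (s + r) / (1 + s * r) := by
    rw [hrepr, norm_div]
    have hdenpos : 0 < ‖1 + (starRingEnd ℂ) a * v‖ := norm_pos_iff.mpr hvd
    rw [div_le_div_iff₀ hdenpos (by nlinarith)]
    rw [← Complex.sq_norm, ← Complex.sq_norm] at key
    have key2 : (‖v + a‖ * (1 + s * r)) ^ 2
        ≤ ((s + r) * ‖1 + (starRingEnd ℂ) a * v‖) ^ 2 := by
      rw [mul_pow, mul_pow]; exact key
    have h3 := Real.sqrt_le_sqrt key2
    rwa [Real.sqrt_sq (by positivity), Real.sqrt_sq (by positivity)] at h3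
  have hfrac1 : (s + r) / (1 + s * r) < 1 := by
    rw [div_lt_one (by nlinarith)]; nlinarith
  calc artanh (‖g α‖) ≤ artanh ((s + r) / (1 + s * r)) :=
        artanh_le_artanh (norm_nonneg _) hbound hfrac1
    _ = artanh s + artanh r := (artanh_add hs0 hs1 hr0 ha).symm
    _ ≤ artanh (‖α‖) + artanh r := by
        gcongr ?_ + _
        exact artanh_le_artanh hs0 hsch hαlt
    _ = artanh (‖g 0‖) + artanh (‖α‖) := by
        rw [hr, ha_def]; ring

lemma abs_one_sub_cos (w : ℂ) :
    ‖1 - Complex.cos w‖ = Real.cosh w.im - Real.cos w.re := by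
  have h1 : (1 - Complex.cos w).re = 1 - Real.cos w.re * Real.cosh w.im := by
    rw [Complex.cos_eq]; simp [Complex.cos_ofReal_re, Complex.sin_ofReal_re, Complex.sinh_ofReal_re, Complex.cosh_ofReal_re]
  have h2 : (1 - Complex.cos w).im = Real.sin w.re * Real.sinh w.im := by
    rw [Complex.cos_eq]; simp [Complex.cos_ofReal_re, Complex.sin_ofReal_re, Complex.sinh_ofReal_re, Complex.cosh_ofReal_re]
  have hnn : 0 ≤ Real.cosh w.im - Real.cos w.re := by
    nlinarith [Real.one_le_cosh w.im, Real.cos_le_one w.re]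
  have hsq : (‖1 - Complex.cos w‖)^2 = (Real.cosh w.im - Real.cos w.re)^2 := by
    rw [Complex.sq_norm, Complex.normSq_apply, h1, h2]
    nlinarith [Real.sin_sq_add_cos_sq w.re, Real.cosh_sq_sub_sinh_sq w.im]
  calc ‖1 - Complex.cos w‖
      = Real.sqrt ((‖1 - Complex.cos w‖)^2) :=
        (Real.sqrt_sq (norm_nonneg _)).symm
    _ = Real.sqrt ((Real.cosh w.im - Real.cos w.re)^2) := by rw [hsq]
    _ = Real.cosh w.im - Real.cos w.re := Real.sqrt_sq hnn

lemma abs_one_add_cos (w : ℂ) :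
    ‖1 + Complex.cos w‖ = Real.cosh w.im + Real.cos w.re := by
  have h1 : (1 + Complex.cos w).re = 1 + Real.cos w.re * Real.cosh w.im := by
    rw [Complex.cos_eq]; simp [Complex.cos_ofReal_re, Complex.sin_ofReal_re, Complex.sinh_ofReal_re, Complex.cosh_ofReal_re]
  have h2 : (1 + Complex.cos w).im = -(Real.sin w.re * Real.sinh w.im) := by
    rw [Complex.cos_eq]; simp [Complex.cos_ofReal_re, Complex.sin_ofReal_re, Complex.sinh_ofReal_re, Complex.cosh_ofReal_re]
  have hnn : 0 ≤ Real.cosh w.im + Real.cos w.re := by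
    nlinarith [Real.one_le_cosh w.im, Real.neg_one_le_cos w.re]
  have hsq : (‖1 + Complex.cos w‖)^2 = (Real.cosh w.im + Real.cos w.re)^2 := by
    rw [Complex.sq_norm, Complex.normSq_apply, h1, h2]
    nlinarith [Real.sin_sq_add_cos_sq w.re, Real.cosh_sq_sub_sinh_sq w.im]
  calc ‖1 + Complex.cos w‖
      = Real.sqrt ((‖1 + Complex.cos w‖)^2) :=
        (Real.sqrt_sq (norm_nonneg _)).symm
    _ = Real.sqrt ((Real.cosh w.im + Real.cos w.re)^2) := by rw [hsq]
    _ = Real.cosh w.im + Real.cos w.re := Real.sqrt_sq hnn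

lemma abs_tanh_lt_one (t : ℝ) : |Real.tanh t| < 1 := by
  rw [Real.tanh_eq_sinh_div_cosh, abs_div, abs_of_pos (Real.cosh_pos t), div_lt_one (Real.cosh_pos t)]
  nlinarith [Real.cosh_sq_sub_sinh_sq t, Real.cosh_pos t, abs_nonneg (Real.sinh t), sq_abs (Real.sinh t)]

lemma log_ratio_tanh {t : ℝ} : Real.log ((1 + Real.tanh t) / (1 - Real.tanh t)) = 2 * t := by
  have hch := Real.cosh_pos t
  have e1 : 1 + Real.tanh t = Real.exp t / Real.cosh t := by
    rw [Real.tanh_eq_sinh_div_cosh, ← Real.cosh_add_sinh t]; field_simp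
  have e2 : 1 - Real.tanh t = Real.exp (-t) / Real.cosh t := by
    rw [Real.tanh_eq_sinh_div_cosh, ← Real.cosh_sub_sinh t]; field_simp
  have e3 : (1 + Real.tanh t) / (1 - Real.tanh t) = Real.exp (2*t) := by
    rw [e1, e2]
    rw [div_div_div_cancel_right₀]
    · rw [← Real.exp_sub]; ring_nf
    · exact hch.ne'
  rw [e3, Real.log_exp]


section MinkSection
variable {E : Type*} [NormedAddCommGroup E] [NormedSpace ℂ E]

lemma zero_mem_of_balanced {D : Set E} (hbal : IsBalanced D) {z : E} (hz : z ∈ D) :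
    (0:E) ∈ D := by simpa using hbal z hz 0 (by simp)

lemma minkowski_mem_one {D : Set E} {z : E} (hz : z ∈ D) :
    (1:ℝ) ∈ { t : ℝ | 0 < t ∧ (t⁻¹ : ℂ) • z ∈ D } := ⟨one_pos, by simpa using hz⟩

lemma minkowski_bddBelow (D : Set E) (z : E) :
    BddBelow { t : ℝ | 0 < t ∧ (t⁻¹ : ℂ) • z ∈ D } := ⟨0, fun _ ht => ht.1.le⟩

lemma minkowski_nonneg (D : Set E) (z : E) : 0 ≤ minkowski D z :=
  Real.sInf_nonneg (fun _ ht => ht.1.le)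

lemma minkowski_lt_one {D : Set E} (ho : IsOpen D) {z : E} (hz : z ∈ D) :
    minkowski D z < 1 := by
  obtain ⟨ε, hε, hball⟩ := Metric.isOpen_iff.mp ho z hz
  set δ : ℝ := ε / (2 * (‖z‖ + 1)) with hδ
  have hδpos : 0 < δ := by positivity
  have hδz : δ * ‖z‖ < ε := by
    rw [hδ, div_mul_eq_mul_div, div_lt_iff₀ (by positivity)]
    nlinarith [norm_nonneg z, hε]
  have hmem : (1 + δ)⁻¹ ∈ { t : ℝ | 0 < t ∧ (t⁻¹ : ℂ) • z ∈ D } := by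
    refine ⟨by positivity, ?_⟩
    apply hball
    rw [mem_ball_iff_norm]
    have h1 : ((((1 + δ)⁻¹ : ℝ) : ℂ))⁻¹ • z - z = ((δ : ℝ) : ℂ) • z := by
      nth_rewrite 2 [← one_smul ℂ z]
      rw [← sub_smul]
      congr 1
      push_cast
      rw [inv_inv]
      ring
    rw [h1, norm_smul, Complex.norm_real, Real.norm_eq_abs, abs_of_pos hδpos]
    exact hδz
  calc minkowski D z ≤ (1 + δ)⁻¹ := csInf_le (minkowski_bddBelow D z) hmem
    _ < 1 := by
      rw [inv_lt_one_iff₀]; right; linarith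

lemma eq_zero_of_minkowski_eq_zero {D : Set E} (hb : Bornology.IsBounded D) {z : E}
    (hz : z ∈ D) (h0 : minkowski D z = 0) : z = 0 := by
  obtain ⟨R, hR⟩ := isBounded_iff_forall_norm_le.mp hb
  by_contra hne
  have hnz : 0 < ‖z‖ := norm_pos_iff.mpr hne
  have hR0 : 0 < R := lt_of_lt_of_le hnz (hR z hz)
  have hlt : minkowski D z < ‖z‖ / R := by rw [h0]; positivity
  obtain ⟨t, ht, htlt⟩ := exists_lt_of_csInf_lt ⟨1, minkowski_mem_one hz⟩ hlt
  have h1 : ‖((t : ℝ) : ℂ)⁻¹ • z‖ ≤ R := hR _ ht.2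
  have h2 : ‖((t : ℝ) : ℂ)⁻¹ • z‖ = t⁻¹ * ‖z‖ := by
    rw [norm_smul, norm_inv, Complex.norm_real, Real.norm_eq_abs, abs_of_pos ht.1]
  rw [h2] at h1
  have h3 : t * R < ‖z‖ := (lt_div_iff₀ hR0).mp htlt
  nlinarith [mul_le_mul_of_nonneg_left h1 ht.1.le, mul_inv_cancel₀ ht.1.ne']

lemma minkowski_boundary_not_mem {D : Set E} (ho : IsOpen D) {z : E}
    (hz : z ∈ D) (hl : 0 < minkowski D z) :
    ((minkowski D z : ℝ) : ℂ)⁻¹ • z ∉ D := by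
  set l := minkowski D z with hldef
  intro hmem
  have hzne : z ≠ 0 := by
    intro hc
    rw [hc, smul_zero] at hmem
    have : l ≤ l/2 := by
      apply csInf_le (minkowski_bddBelow D z)
      refine ⟨by linarith, ?_⟩
      rw [hc, smul_zero]; exact hmem
    linarith
  obtain ⟨ε, hε, hball⟩ := Metric.isOpen_iff.mp ho _ hmem
  have hnorm : ‖((l : ℝ) : ℂ)⁻¹ • z‖ = l⁻¹ * ‖z‖ := by
    rw [norm_smul, norm_inv, Complex.norm_real, Real.norm_eq_abs, abs_of_pos hl]
  set δ : ℝ := ε * l / (2 * (‖z‖ + 1)) with hδ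
  have hδpos : 0 < δ := by positivity
  have hδz : (δ / l) * ‖z‖ < ε := by
    rw [hδ]
    rw [div_mul_eq_mul_div, div_lt_iff₀ hl, div_mul_eq_mul_div, div_lt_iff₀ (by positivity)]
    nlinarith [mul_pos hε hl, norm_nonneg z, mul_nonneg (mul_pos hε hl).le (norm_nonneg z)]
  have hmem2 : l / (1 + δ) ∈ { t : ℝ | 0 < t ∧ (t⁻¹ : ℂ) • z ∈ D } := by
    refine ⟨by positivity, ?_⟩
    apply hball
    rw [mem_ball_iff_norm]
    have h1 : ((l / (1 + δ) : ℝ) : ℂ)⁻¹ • z - ((l : ℝ) : ℂ)⁻¹ • z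
        = ((δ / l : ℝ) : ℂ) • z := by
      rw [← sub_smul]
      congr 1
      have hlC : (l : ℂ) ≠ 0 := by exact_mod_cast hl.ne'
      have hdC : ((1 + δ : ℝ) : ℂ) ≠ 0 := by
        have : (0:ℝ) < 1 + δ := by positivity
        exact_mod_cast this.ne'
      push_cast
      field_simp
      ring
    rw [h1, norm_smul, Complex.norm_real, Real.norm_eq_abs,
      abs_of_pos (by positivity : (0:ℝ) < δ / l)]
    exact hδz
  have hle : l ≤ l / (1 + δ) := csInf_le (minkowski_bddBelow D z) hmem2
  have hlt : l / (1 + δ) < l := by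
    rw [div_lt_iff₀ (by positivity)]
    nlinarith
  linarith

end MinkSection

lemma exists_functional {E : Type*} [NormedAddCommGroup E] [NormedSpace ℂ E]
    [NormedSpace ℝ E] [IsScalarTower ℝ ℂ E]
    {D : Set E} (ho : IsOpen D) (hc : Convex ℝ D) (hbal : IsBalanced D)
    (h0 : (0:E) ∈ D) {x₀ : E} (hx₀ : x₀ ∉ D) :
    ∃ L : E →L[ℂ] ℂ, (∀ x ∈ D, ‖L x‖ < 1) ∧ 1 ≤ ‖L x₀‖ := by
  obtain ⟨f, hf⟩ := geometric_hahn_banach_open_point hc ho hx₀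
  have hc0 : 0 < f x₀ := by simpa using hf 0 h0
  set c := f x₀ with hcdef
  set L0 : E →L[ℂ] ℂ := f.extendTo𝕜' with hL0
  have hre : ∀ x : E, (L0 x).re = f x := by
    intro x
    have := f.toLinearMap.extendTo𝕜'_apply_re (𝕜 := ℂ) x
    exact this
  have habs : ∀ x ∈ D, ‖L0 x‖ < c := by
    intro x hx
    rcases eq_or_ne (L0 x) 0 with h | h
    · rw [h]; simpa using hc0
    · set u : ℂ := ((‖L0 x‖ : ℝ) : ℂ)⁻¹ * (starRingEnd ℂ) (L0 x) with hu
      have habs0 : (0:ℝ) < ‖L0 x‖ := norm_pos_iff.mpr h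
      have hu1 : ‖u‖ = 1 := by
        rw [hu, norm_mul, norm_inv, Complex.norm_real, Real.norm_eq_abs, Complex.norm_conj,
          abs_of_pos habs0, inv_mul_cancel₀ habs0.ne']
      have hux : u • x ∈ D := hbal x hx u hu1.le
      have hL0u : L0 (u • x) = ((‖L0 x‖ : ℝ) : ℂ) := by
        rw [map_smul, hu, smul_eq_mul, mul_assoc,
          mul_comm ((starRingEnd ℂ) (L0 x)) (L0 x), Complex.mul_conj]
        have hnsq : Complex.normSq (L0 x) = ‖L0 x‖ * ‖L0 x‖ := by
          rw [Complex.normSq_eq_norm_sq]; ring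
        rw [hnsq]
        push_cast
        field_simp
      have := hf _ hux
      rw [← hre] at this
      rw [hL0u] at this
      simpa using this
  refine ⟨((c : ℝ) : ℂ)⁻¹ • L0, ?_, ?_⟩
  · intro x hx
    rw [ContinuousLinearMap.smul_apply, smul_eq_mul, norm_mul, norm_inv, Complex.norm_real, Real.norm_eq_abs,
      abs_of_pos hc0]
    have h2 : c⁻¹ * ‖L0 x‖ < c⁻¹ * c :=
      mul_lt_mul_of_pos_left (habs x hx) (by positivity)
    rwa [inv_mul_cancel₀ hc0.ne'] at h2
  · rw [ContinuousLinearMap.smul_apply, smul_eq_mul, norm_mul, norm_inv, Complex.norm_real, Real.norm_eq_abs,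
      abs_of_pos hc0]
    have : c ≤ ‖L0 x₀‖ := by
      calc c = (L0 x₀).re := (hre x₀).symm
        _ ≤ ‖L0 x₀‖ := Complex.re_le_norm _
    rw [le_inv_mul_iff₀ hc0, mul_one]
    exact this


section DiskSection
variable {E : Type*} [NormedAddCommGroup E] [NormedSpace ℂ E] [NormedSpace ℝ E] [IsScalarTower ℝ ℂ E]

lemma ofReal_smul_eq (r : ℝ) (x : E) : ((r : ℝ) : ℂ) • x = r • x := by
  rw [← smul_one_smul ℂ r x]
  congr 1
  simp [Complex.real_smul]

lemma abs_convex_mem {D : Set E} (hc : Convex ℝ D) (hbal : IsBalanced D)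
    (h0 : (0:E) ∈ D) {u v : E} (hu : u ∈ D) (hv : v ∈ D) {A B : ℂ}
    (hAB : ‖A‖ + ‖B‖ ≤ 1) : A • u + B • v ∈ D := by
  have helper : ∀ (C : ℂ) (x : E), x ∈ D → ∃ x' ∈ D, C • x = ((‖C‖ : ℝ) : ℂ) • x' := by
    intro C x hx
    rcases eq_or_ne C 0 with h | h
    · exact ⟨x, hx, by simp [h]⟩
    · have hCpos := norm_pos_iff.mpr h
      have hCne : ((‖C‖ : ℝ) : ℂ) ≠ 0 := by exact_mod_cast hCpos.ne'
      refine ⟨(((‖C‖ : ℝ) : ℂ)⁻¹ * C) • x, hbal x hx _ ?_, ?_⟩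
      · rw [norm_mul, norm_inv, Complex.norm_real, Real.norm_eq_abs, abs_of_pos hCpos,
          inv_mul_cancel₀ hCpos.ne']
      · rw [smul_smul]
        congr 1
        field_simp
  obtain ⟨u', hu', hAu⟩ := helper A u hu
  obtain ⟨v', hv', hBv⟩ := helper B v hv
  rw [hAu, hBv, ofReal_smul_eq, ofReal_smul_eq]
  set a := ‖A‖ with ha
  set b := ‖B‖ with hb
  have ha0 : 0 ≤ a := norm_nonneg A
  have hb0 : 0 ≤ b := norm_nonneg B
  rcases eq_or_lt_of_le (by linarith : (0:ℝ) ≤ a + b) with h | h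
  · have haz : a = 0 := by linarith
    have hbz : b = 0 := by linarith
    rw [haz, hbz]; simpa using h0
  · have hw : (a/(a+b)) • u' + (b/(a+b)) • v' ∈ D :=
      hc hu' hv' (by positivity) (by positivity) (by field_simp)
    have hfin : (a+b) • ((a/(a+b)) • u' + (b/(a+b)) • v') + (1 - (a+b)) • (0:E) ∈ D :=
      hc hw h0 (by linarith) (by linarith) (by ring)
    have heq : (a+b) • ((a/(a+b)) • u' + (b/(a+b)) • v') + (1 - (a+b)) • (0:E)
        = a • u' + b • v' := by
      rw [smul_zero, add_zero, smul_add, smul_smul, smul_smul]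
      congr 2 <;> field_simp
    rwa [heq] at hfin

lemma exists_dilation {D : Set E} (ho : IsOpen D) {x : E} (hx : x ∈ D) :
    ∃ s : ℝ, 1 < s ∧ ((s : ℝ) : ℂ) • x ∈ D := by
  rcases eq_or_ne x 0 with h | h
  · exact ⟨2, one_lt_two, by rw [h, smul_zero]; rwa [h] at hx⟩
  · obtain ⟨ε, hε, hball⟩ := Metric.isOpen_iff.mp ho x hx
    have hnx : 0 < ‖x‖ := norm_pos_iff.mpr h
    set δ : ℝ := ε / (2 * ‖x‖) with hδ
    have hδpos : 0 < δ := by positivity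
    refine ⟨1 + δ, by linarith, ?_⟩
    apply hball
    rw [mem_ball_iff_norm]
    have h1 : ((1 + δ : ℝ) : ℂ) • x - x = ((δ : ℝ) : ℂ) • x := by
      nth_rewrite 2 [← one_smul ℂ x]
      rw [← sub_smul]
      congr 1
      push_cast
      ring
    rw [h1, norm_smul, Complex.norm_real, Real.norm_eq_abs, abs_of_pos hδpos]
    rw [hδ, div_mul_eq_mul_div, div_lt_iff₀ (by positivity)]
    nlinarith

lemma analytic_disk_exists {D : Set E} (ho : IsOpen D) (hc : Convex ℝ D)
    (hbal : IsBalanced D) {p q : E} (hp : p ∈ D) (hq : q ∈ D) :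
    ∃ (φ : ℂ → E) (α : ℂ), DifferentiableOn ℂ φ (ball 0 1) ∧
      MapsTo φ (ball 0 1) D ∧ φ 0 = p ∧ α ∈ ball (0:ℂ) 1 ∧ φ α = q := by
  have h0D : (0:E) ∈ D := by simpa using hbal p hp 0 (by simp)
  obtain ⟨sp, hsp1, hspD⟩ := exists_dilation ho hp
  obtain ⟨sq, hsq1, hsqD⟩ := exists_dilation ho hq
  set s : ℝ := min sp sq with hs
  have hs1 : 1 < s := lt_min hsp1 hsq1
  have hs0 : 0 < s := by linarith
  have hscale : ∀ (σ : ℝ) (x : E), s ≤ σ → ((σ : ℝ) : ℂ) • x ∈ D →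
      ((s : ℝ) : ℂ) • x ∈ D := by
    intro σ x h2 h3
    have hσ0 : 0 < σ := lt_of_lt_of_le hs0 h2
    have heq : ((s : ℝ) : ℂ) • x = ((s/σ : ℝ) : ℂ) • (((σ : ℝ) : ℂ) • x) := by
      rw [smul_smul]
      congr 1
      have hσC : ((σ : ℝ) : ℂ) ≠ 0 := by exact_mod_cast hσ0.ne'
      push_cast
      rw [div_mul_cancel₀ _ hσC]
    rw [heq]
    apply hbal _ h3
    rw [Complex.norm_real, Real.norm_eq_abs, abs_of_pos (by positivity), div_le_one hσ0]
    exact h2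
  have hP : ((s : ℝ) : ℂ) • p ∈ D := hscale sp p (min_le_left _ _) hspD
  have hQ : ((s : ℝ) : ℂ) • q ∈ D := hscale sq q (min_le_right _ _) hsqD
  set c : ℝ := s⁻¹ with hcdef
  have hc0 : 0 < c := by positivity
  have hcs : c * s = 1 := inv_mul_cancel₀ hs0.ne'
  set T : ℝ := Real.log s / 2 with hT
  have hlogpos := Real.log_pos hs1
  have hT0 : 0 < T := by positivity
  have hcoshT : Real.cosh T < s := by
    have h1 : Real.cosh T ≤ Real.exp T := by
      rw [Real.cosh_eq]
      have h2 : Real.exp (-T) ≤ Real.exp T := Real.exp_le_exp.mpr (by linarith)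
      linarith
    have h2 : Real.exp T < Real.exp (Real.log s) := Real.exp_lt_exp.mpr (by linarith [hT.le, hT.ge])
    rw [Real.exp_log hs0] at h2
    linarith
  have hπ := Real.pi_pos
  set β : ℝ := 2 * T / Real.pi with hβ
  have hβ0 : 0 < β := by positivity
  have hβT : β * (Real.pi / 2) = T := by
    rw [hβ]; field_simp
  set tβ : ℝ := Real.pi / (2 * β) with htβ
  set αr : ℝ := Real.tanh tβ with hαr
  have hαr1 := abs_tanh_lt_one tβ
  rw [← hαr] at hαr1
  have hαrlt : αr < 1 := lt_of_le_of_lt (le_abs_self αr) hαr1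
  have hαrgt : -1 < αr := by
    have := neg_abs_le αr
    linarith [abs_lt.mp hαr1]
  set k : ℂ → ℂ := fun l => Complex.log ((1 + l) / (1 - l)) with hk
  have hsub : ∀ l : ℂ, ‖l‖ < 1 → (1 : ℂ) - l ≠ 0 := by
    intro l hl hcon
    have hl1 : l = 1 := by linear_combination -hcon
    rw [hl1] at hl; simp at hl
  have hre : ∀ l : ℂ, ‖l‖ < 1 → 0 < ((1 + l) / (1 - l)).re := by
    intro l hl
    rw [Complex.div_re]
    have hnum : (1+l).re * (1-l).re / Complex.normSq (1-l)
        + (1+l).im * (1-l).im / Complex.normSq (1-l)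
        = (1 - Complex.normSq l) / Complex.normSq (1-l) := by
      rw [← add_div]
      congr 1
      simp [Complex.normSq_apply]
      ring
    rw [hnum]
    have hlt : Complex.normSq l < 1 := by
      rw [← Complex.sq_norm]; nlinarith [norm_nonneg l]
    exact div_pos (by linarith) (Complex.normSq_pos.mpr (hsub l hl))
  have hkim : ∀ l : ℂ, ‖l‖ < 1 → |(k l).im| < Real.pi / 2 := by
    intro l hl
    simp only [hk, Complex.log_im]
    exact Complex.abs_arg_lt_pi_div_two_iff.mpr (Or.inl (hre l hl))
  have hkdiff : DifferentiableOn ℂ k (ball 0 1) := by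
    intro l hlm
    have hl : ‖l‖ < 1 := by
      rw [mem_ball_zero_iff] at hlm; exact hlm
    apply DifferentiableAt.differentiableWithinAt
    have hdiv : DifferentiableAt ℂ (fun l : ℂ => (1 + l)/(1 - l)) l :=
      DifferentiableAt.div ((differentiableAt_const 1).add differentiableAt_id)
        ((differentiableAt_const 1).sub differentiableAt_id) (hsub l hl)
    exact (Complex.differentiableAt_log
      (Complex.mem_slitPlane_iff.mpr (Or.inl (hre l hl)))).comp l hdiv
  set g : ℂ → ℂ := fun l => (1 - Complex.cos (((β : ℝ) : ℂ) * k l)) / 2 with hg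
  have hgdiff : DifferentiableOn ℂ g (ball 0 1) := by
    apply DifferentiableOn.div_const
    exact (differentiableOn_const 1).sub
      (Complex.differentiable_cos.comp_differentiableOn
        ((differentiableOn_const _).mul hkdiff))
  have him : ∀ l : ℂ, ‖l‖ < 1 → |(((β : ℝ) : ℂ) * k l).im| < T := by
    intro l hl
    rw [Complex.im_ofReal_mul, abs_mul, abs_of_pos hβ0]
    calc β * |(k l).im| < β * (Real.pi / 2) :=
          mul_lt_mul_of_pos_left (hkim l hl) hβ0
      _ = T := hβT
  set φ : ℂ → E := fun l => (((c : ℝ) : ℂ) * (1 - g l)) • (((s : ℝ) : ℂ) • p)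
      + (((c : ℝ) : ℂ) * g l) • (((s : ℝ) : ℂ) • q) with hφ
  have hφdiff : DifferentiableOn ℂ φ (ball 0 1) := by
    apply DifferentiableOn.add
    · exact ((differentiableOn_const _).mul
        ((differentiableOn_const 1).sub hgdiff)).smul (differentiableOn_const _)
    · exact ((differentiableOn_const _).mul hgdiff).smul (differentiableOn_const _)
  have hφmaps : MapsTo φ (ball 0 1) D := by
    intro l hlm
    have hl : ‖l‖ < 1 := by
      rw [mem_ball_zero_iff] at hlm; exact hlm
    apply abs_convex_mem hc hbal h0D hP hQ
    have hgl : (1:ℂ) - g l = (1 + Complex.cos (((β : ℝ) : ℂ) * k l)) / 2 := by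
      simp only [hg]; ring
    have hgl2 : g l = (1 - Complex.cos (((β : ℝ) : ℂ) * k l)) / 2 := by
      simp only [hg]
    rw [norm_mul, norm_mul, Complex.norm_real, Real.norm_eq_abs, abs_of_pos hc0, hgl, hgl2,
      norm_div, norm_div, Complex.norm_two]
    rw [abs_one_add_cos, abs_one_sub_cos]
    have h1 := him l hl
    have h2 : Real.cosh ((((β : ℝ) : ℂ) * k l).im) < Real.cosh T := by
      rw [Real.cosh_lt_cosh]
      rwa [abs_of_pos hT0]
    have h3 : Real.cosh ((((β : ℝ) : ℂ) * k l).im) < s := lt_trans h2 hcoshT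
    have h4 : c * Real.cosh ((((β : ℝ) : ℂ) * k l).im) < 1 := by
      calc c * Real.cosh ((((β : ℝ) : ℂ) * k l).im) < c * s :=
            mul_lt_mul_of_pos_left h3 hc0
        _ = 1 := hcs
    set x := Real.cos ((((β : ℝ) : ℂ) * k l).re)
    linarith
  have hk0 : k 0 = 0 := by
    simp only [hk]
    norm_num
  have hg0 : g 0 = 0 := by
    simp only [hg, hk0, mul_zero, Complex.cos_zero]
    norm_num
  have hcsC : ((c : ℝ) : ℂ) * ((s : ℝ) : ℂ) = 1 := by
    rw [← Complex.ofReal_mul, hcs, Complex.ofReal_one]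
  have hφ0 : φ 0 = p := by
    simp only [hφ, hg0, sub_zero, mul_one, mul_zero, zero_smul, zero_mul, add_zero, smul_smul,
      hcsC, one_smul]
  have hαball : ((αr : ℝ) : ℂ) ∈ ball (0:ℂ) 1 := by
    rw [mem_ball_zero_iff, Complex.norm_real, Real.norm_eq_abs]
    exact hαr1
  have hkα : k ((αr : ℝ) : ℂ) = ((2 * tβ : ℝ) : ℂ) := by
    simp only [hk]
    have h1 : (0:ℝ) < 1 + αr := by linarith
    have h2 : (0:ℝ) < 1 - αr := by linarith
    have hcast : ((1:ℂ) + (αr : ℂ)) / (1 - (αr : ℂ)) = (((1 + αr) / (1 - αr) : ℝ) : ℂ) := by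
      push_cast
      ring
    have hlog : Real.log ((1 + αr) / (1 - αr)) = 2 * tβ := by
      rw [hαr]; exact log_ratio_tanh
    rw [hcast, ← Complex.ofReal_log (le_of_lt (div_pos h1 h2)), hlog]
  have hβkα : ((β : ℝ) : ℂ) * k ((αr : ℝ) : ℂ) = ((Real.pi : ℝ) : ℂ) := by
    rw [hkα, ← Complex.ofReal_mul]
    congr 1
    rw [htβ]
    field_simp
  have hgα : g ((αr : ℝ) : ℂ) = 1 := by
    simp only [hg, hβkα]
    rw [← Complex.ofReal_cos, Real.cos_pi]
    norm_num
  have hφα : φ ((αr : ℝ) : ℂ) = q := by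
    simp only [hφ, hgα, sub_self, mul_zero, zero_mul, zero_smul, mul_one, zero_add, smul_smul,
      hcsC, one_smul]
  exact ⟨φ, ((αr : ℝ) : ℂ), hφdiff, hφmaps, hφ0, hαball, hφα⟩

end DiskSection

end Auxiliary

set_option maxHeartbeats 1600000 in
/-- On a bounded balanced convex domain, `tanh (k_D(0, z)) = l_D(z)` for all `z ∈ D`. -/
theorem tanh_kobayashi_eq_minkowski {n : ℕ} (D : Set (EuclideanSpace ℂ (Fin n)))
    (ho : IsOpen D) (hb : Bornology.IsBounded D) (hbal : IsBalanced D) (hc : Convex ℝ D)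
    (z : EuclideanSpace ℂ (Fin n)) (hz : z ∈ D) :
    Real.tanh (kobayashi D 0 z) = minkowski D z := by
  have h0D : (0 : EuclideanSpace ℂ (Fin n)) ∈ D := zero_mem_of_balanced hbal hz
  -- nonnegativity of the Lempert function
  have hlem_lb : ∀ x y : EuclideanSpace ℂ (Fin n),
      ∀ r ∈ { r | ∃ (φ : ℂ → EuclideanSpace ℂ (Fin n)) (α : ℂ),
        DifferentiableOn ℂ φ (ball 0 1) ∧ MapsTo φ (ball 0 1) D ∧ φ 0 = x ∧
        α ∈ ball (0:ℂ) 1 ∧ φ α = y ∧ r = artanh (‖α‖) }, 0 ≤ r := by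
    rintro x y r ⟨φ, α, hφd, hφm, hφ0, hαm, hφα, rfl⟩
    exact artanh_nonneg (norm_nonneg α)
      (by rwa [mem_ball_zero_iff] at hαm)
  have hlem_nonneg : ∀ x y : EuclideanSpace ℂ (Fin n), 0 ≤ lempert D x y := by
    intro x y
    exact Real.sInf_nonneg (hlem_lb x y)
  -- the chain set for `kobayashi D 0 z`
  have hK_lb : ∀ s ∈ { s | ∃ (m : ℕ) (p : ℕ → EuclideanSpace ℂ (Fin n)), p 0 = 0 ∧ p m = z ∧
      (∀ i ≤ m, p i ∈ D) ∧ s = ∑ i ∈ Finset.range m, lempert D (p i) (p (i+1)) }, 0 ≤ s := by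
    rintro s ⟨m, p, hp0, hpm, hpD, rfl⟩
    exact Finset.sum_nonneg fun i _ => hlem_nonneg _ _
  have hK_ne : lempert D 0 z ∈ { s | ∃ (m : ℕ) (p : ℕ → EuclideanSpace ℂ (Fin n)),
      p 0 = 0 ∧ p m = z ∧ (∀ i ≤ m, p i ∈ D) ∧
      s = ∑ i ∈ Finset.range m, lempert D (p i) (p (i+1)) } := by
    refine ⟨1, fun i => if i = 0 then 0 else z, by simp, by simp, ?_, ?_⟩
    · intro i _
      by_cases hi : i = 0 <;> simp [hi, h0D, hz]
    · rw [Finset.sum_range_one]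
      simp
  have hkob_nonneg : 0 ≤ kobayashi D 0 z := Real.sInf_nonneg hK_lb
  have hl1 : minkowski D z < 1 := minkowski_lt_one ho hz
  -- upper bound: tanh (kobayashi) ≤ minkowski
  have hub : ∀ t : ℝ, minkowski D z < t → t < 1 → Real.tanh (kobayashi D 0 z) ≤ t := by
    intro t hlt ht1
    obtain ⟨t', ht', ht'lt⟩ := exists_lt_of_csInf_lt ⟨1, minkowski_mem_one hz⟩ hlt
    have ht0 : 0 < t := lt_trans ht'.1 ht'lt
    have htC : ((t : ℝ) : ℂ) ≠ 0 := by exact_mod_cast ht0.ne'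
    have ht'C : ((t' : ℝ) : ℂ) ≠ 0 := by exact_mod_cast ht'.1.ne'
    have hlem : lempert D 0 z ≤ artanh t := by
      unfold lempert
      apply csInf_le ⟨0, hlem_lb 0 z⟩
      refine ⟨fun l => (l / ((t : ℝ) : ℂ)) • z, ((t : ℝ) : ℂ), ?_, ?_, by simp, ?_, ?_, ?_⟩
      · have heq : (fun l : ℂ => (l / ((t : ℝ) : ℂ)) • z)
            = fun l : ℂ => l • (((t : ℝ) : ℂ)⁻¹ • z) := by
          funext l
          rw [smul_smul, div_eq_mul_inv]
        rw [heq]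
        exact (differentiable_id.smul_const _).differentiableOn
      · intro l hlm
        have hl : ‖l‖ < 1 := by
          rwa [mem_ball_zero_iff] at hlm
        have heq : (l / ((t : ℝ) : ℂ)) • z
            = (l * ((t' : ℝ) : ℂ) / ((t : ℝ) : ℂ)) • ((((t' : ℝ) : ℂ))⁻¹ • z) := by
          rw [smul_smul]
          congr 1
          field_simp
        show (l / ((t : ℝ) : ℂ)) • z ∈ D
        rw [heq]
        apply hbal _ ht'.2
        rw [norm_div, norm_mul, Complex.norm_real, Real.norm_eq_abs, Complex.norm_real, Real.norm_eq_abs,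
          abs_of_pos ht'.1, abs_of_pos ht0]
        rw [div_le_one (by positivity)]
        nlinarith [norm_nonneg l, ht'.1]
      · rw [mem_ball_zero_iff, Complex.norm_real, Real.norm_eq_abs, abs_of_pos ht0]
        exact ht1
      · show (((t : ℝ) : ℂ) / ((t : ℝ) : ℂ)) • z = z
        rw [div_self htC, one_smul]
      · rw [Complex.norm_real, Real.norm_eq_abs, abs_of_pos ht0]
    have hkob : kobayashi D 0 z ≤ artanh t :=
      le_trans (csInf_le ⟨0, hK_lb⟩ hK_ne) hlem
    calc Real.tanh (kobayashi D 0 z) ≤ Real.tanh (artanh t) := tanh_mono hkob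
      _ = t := tanh_artanh ht0.le ht1
  have hupper : Real.tanh (kobayashi D 0 z) ≤ minkowski D z := by
    by_contra hcon
    push_neg at hcon
    set l := minkowski D z with hldef
    set t : ℝ := min ((l + Real.tanh (kobayashi D 0 z)) / 2) ((l + 1) / 2) with htdef
    have hlt : l < t := lt_min (by linarith) (by linarith)
    have ht1 : t < 1 := lt_of_le_of_lt (min_le_right _ _) (by linarith)
    have := hub t hlt ht1
    have h2 : t ≤ (l + Real.tanh (kobayashi D 0 z)) / 2 := min_le_left _ _
    linarith
  -- lower bound: minkowski ≤ tanh (kobayashi)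
  have hlower : minkowski D z ≤ Real.tanh (kobayashi D 0 z) := by
    rcases eq_or_lt_of_le (minkowski_nonneg D z) with h0 | hlpos
    · rw [← h0]
      calc (0:ℝ) = Real.tanh 0 := Real.tanh_zero.symm
        _ ≤ Real.tanh (kobayashi D 0 z) := tanh_mono hkob_nonneg
    · set l := minkowski D z with hldef
      have hx₀ : ((l : ℝ) : ℂ)⁻¹ • z ∉ D := minkowski_boundary_not_mem ho hz hlpos
      obtain ⟨L, hLD, hLx₀⟩ := exists_functional ho hc hbal h0D hx₀
      have hlC : ((l : ℝ) : ℂ) ≠ 0 := by exact_mod_cast hlpos.ne'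
      have hLz : l ≤ ‖L z‖ := by
        have hzeq : z = ((l : ℝ) : ℂ) • (((l : ℝ) : ℂ)⁻¹ • z) := by
          rw [smul_smul, mul_inv_cancel₀ hlC, one_smul]
        have habs : ‖L z‖ = l * ‖L (((l : ℝ) : ℂ)⁻¹ • z)‖ := by
          conv_lhs => rw [hzeq]
          rw [map_smul, smul_eq_mul, norm_mul, Complex.norm_real, Real.norm_eq_abs, abs_of_pos hlpos]
        rw [habs]
        nlinarith [hLx₀, hlpos]
      have hLz1 : ‖L z‖ < 1 := hLD z hz
      have key : artanh l ≤ kobayashi D 0 z := by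
        unfold kobayashi
        apply le_csInf ⟨_, hK_ne⟩
        rintro s ⟨m, p, hp0, hpm, hpD, rfl⟩
        have hlink : ∀ i, i < m →
            artanh (‖L (p (i+1))‖) - artanh (‖L (p i)‖)
              ≤ lempert D (p i) (p (i+1)) := by
          intro i him
          have hpi : p i ∈ D := hpD i (by omega)
          have hpi1 : p (i+1) ∈ D := hpD (i+1) (by omega)
          obtain ⟨φ, α, hφd, hφm, hφ0, hαm, hφα⟩ := analytic_disk_exists ho hc hbal hpi hpi1
          unfold lempert
          apply le_csInf
          · exact ⟨artanh (‖α‖), φ, α, hφd, hφm, hφ0, hαm, hφα, rfl⟩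
          rintro r ⟨ψ, γ, hψd, hψm, hψ0, hγm, hψγ, rfl⟩
          have hgd : DifferentiableOn ℂ (fun w => L (ψ w)) (ball 0 1) :=
            L.differentiable.comp_differentiableOn hψd
          have hgm : MapsTo (fun w => L (ψ w)) (ball 0 1) (ball 0 1) := by
            intro w hw
            rw [mem_ball_zero_iff]
            exact hLD _ (hψm hw)
          have hsp := schwarz_pick_link hgd hgm hγm
          simp only [hψ0, hψγ] at hsp
          linarith
        have htel := Finset.sum_range_sub (fun i => artanh (‖L (p i)‖)) m
        have hsum : artanh (‖L (p m)‖) - artanh (‖L (p 0)‖)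
            ≤ ∑ i ∈ Finset.range m, lempert D (p i) (p (i+1)) := by
          rw [← htel]
          exact Finset.sum_le_sum fun i hi => hlink i (Finset.mem_range.mp hi)
        rw [hp0, hpm, map_zero, norm_zero, artanh_zero, sub_zero] at hsum
        have hmono : artanh l ≤ artanh (‖L z‖) :=
          artanh_le_artanh hlpos.le hLz hLz1
        linarith
      calc l = Real.tanh (artanh l) := (tanh_artanh hlpos.le hl1).symm
        _ ≤ Real.tanh (kobayashi D 0 z) := tanh_mono key
  exact le_antisymm hupper hlower
end

section
/- The squeezing function of the punctured unit disk satisfies s_{Δ*}(a) = |a| for every a ∈ Δ*. -/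
open Set Metric

open Set Metric



lemma mob_den_ne {a z : ℂ} (ha : ‖a‖ < 1) (hz : ‖z‖ < 1) :
    1 - (starRingEnd ℂ) a * z ≠ 0 := by
  intro h
  have h1 : (starRingEnd ℂ) a * z = 1 := by linear_combination -h
  have h2 : ‖(starRingEnd ℂ) a * z‖ = 1 := by rw [h1, norm_one]
  rw [norm_mul, Complex.norm_conj] at h2
  nlinarith [norm_nonneg a, norm_nonneg z]

lemma mob_mem {a z : ℂ} (ha : ‖a‖ < 1) (hz : ‖z‖ < 1) :
    ‖(a - z) / (1 - (starRingEnd ℂ) a * z)‖ < 1 := by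
  rw [norm_div, div_lt_one (norm_pos_iff.mpr (mob_den_ne ha hz))]
  have ha2 : Complex.normSq a < 1 := by
    rw [Complex.normSq_eq_norm_sq]; nlinarith [norm_nonneg a]
  have hz2 : Complex.normSq z < 1 := by
    rw [Complex.normSq_eq_norm_sq]; nlinarith [norm_nonneg z]
  have h1 : Complex.normSq (a - z) < Complex.normSq (1 - (starRingEnd ℂ) a * z) := by
    simp only [Complex.normSq_apply, Complex.sub_re, Complex.sub_im, Complex.one_re,
      Complex.one_im, Complex.mul_re, Complex.mul_im, Complex.conj_re, Complex.conj_im] at ha2 hz2 ⊢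
    nlinarith [mul_pos (sub_pos.mpr ha2) (sub_pos.mpr hz2)]
  have h2 := Real.sqrt_lt_sqrt (Complex.normSq_nonneg _) h1
  rwa [← Complex.norm_def, ← Complex.norm_def] at h2

lemma mob_mob {a z : ℂ} (ha : ‖a‖ < 1) (hz : ‖z‖ < 1) :
    (a - ((a - z) / (1 - (starRingEnd ℂ) a * z))) /
      (1 - (starRingEnd ℂ) a * ((a - z) / (1 - (starRingEnd ℂ) a * z))) = z := by
  have h1 := mob_den_ne ha hz
  have h2 := mob_den_ne ha (mob_mem ha hz)
  rw [div_eq_iff h2]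
  have h1' : 1 - z * (starRingEnd ℂ) a ≠ 0 := by rwa [mul_comm]
  field_simp
  ring

lemma mob_diff {a : ℂ} (ha : ‖a‖ < 1) :
    DifferentiableOn ℂ (fun z => (a - z) / (1 - (starRingEnd ℂ) a * z)) (ball 0 1) := by
  intro z hz
  rw [mem_ball_zero_iff] at hz
  exact (((differentiableAt_const a).sub differentiableAt_id).div
    (((differentiableAt_const 1).sub ((differentiableAt_const _).mul differentiableAt_id)))
    (mob_den_ne ha hz)).differentiableWithinAt

/-- The squeezing function of the punctured unit disk satisfies `s_{Δ*}(a) = |a|`. -/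
theorem squeezing_puncturedDisk (a : ℂ) (ha : a ∈ puncturedDisk) :
    squeezing puncturedDisk a = ‖a‖ := by
  obtain ⟨haball, hane⟩ := ha
  rw [mem_ball_zero_iff] at haball
  have hane : a ≠ 0 := hane
  have hapos : 0 < ‖a‖ := norm_pos_iff.mpr hane
  set φ : ℂ → ℂ := fun z => (a - z) / (1 - (starRingEnd ℂ) a * z) with hφ
  have hmemD : ∀ z : ℂ, ‖z‖ < 1 → z ≠ 0 → z ∈ puncturedDisk := by
    intro z h1 h2
    exact ⟨by rwa [mem_ball_zero_iff], h2⟩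
  have habs : ∀ z : ℂ, z ∈ puncturedDisk → ‖z‖ < 1 := by
    intro z hz
    have := hz.1
    rwa [mem_ball_zero_iff] at this
  apply IsGreatest.csSup_eq
  constructor
  · -- |a| is in the set, witnessed by the Möbius map φ
    refine ⟨φ, (mob_diff haball).mono diff_subset, ?_, ?_, ?_, ?_⟩
    · -- injectivity
      intro u hu v hv huv
      have h1 : (a - φ u) / (1 - (starRingEnd ℂ) a * φ u) = u := mob_mob haball (habs u hu)
      have h2 : (a - φ v) / (1 - (starRingEnd ℂ) a * φ v) = v := mob_mob haball (habs v hv)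
      rw [← h1, ← h2, huv]
    · -- maps to ball
      intro z hz
      rw [mem_ball_zero_iff]
      exact mob_mem haball (habs z hz)
    · -- φ a = 0
      simp [hφ]
    · -- ball 0 |a| ⊆ φ '' puncturedDisk
      intro w hw
      rw [mem_ball_zero_iff] at hw
      have hw1 : ‖w‖ < 1 := hw.trans haball
      have hz1 : ‖φ w‖ < 1 := mob_mem haball hw1
      have hz0 : φ w ≠ 0 := by
        intro h0
        have := mob_mob haball hw1
        rw [show (a - w) / (1 - (starRingEnd ℂ) a * w) = φ w from rfl, h0] at this
        simp at this
        rw [← this] at hw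
        exact lt_irrefl _ hw
      exact ⟨φ w, hmemD _ hz1 hz0, mob_mob haball hw1⟩
  · -- upper bound
    rintro r ⟨f, hfd, hfi, hfm, hfa, hball⟩
    by_contra hcon
    push_neg at hcon
    -- extend f holomorphically across 0
    set c : ℂ := Filter.limUnder (nhdsWithin 0 {(0:ℂ)}ᶜ) f with hc
    set g : ℂ → ℂ := Function.update f 0 c with hgdef
    have hDeq : puncturedDisk = ball (0:ℂ) 1 \ {0} := rfl
    have hb : BddAbove (norm ∘ f '' (ball (0:ℂ) 1 \ {0})) := by
      refine ⟨1, ?_⟩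
      rintro x ⟨z, hz, rfl⟩
      exact le_of_lt (mem_ball_zero_iff.1 (hfm hz))
    have hg : DifferentiableOn ℂ g (ball 0 1) :=
      Complex.differentiableOn_update_limUnder_of_bddAbove (ball_mem_nhds _ one_pos) hfd hb
    have hgf : ∀ z : ℂ, z ≠ 0 → g z = f z := fun z hz => Function.update_of_ne hz _ _
    have hga : g a = 0 := by rw [hgf a hane, hfa]
    have hgct : ContinuousAt g 0 :=
      (hg.differentiableAt (isOpen_ball.mem_nhds (mem_ball_self one_pos))).continuousAt
    have hg0mem : g 0 ∈ closedBall (0:ℂ) 1 := by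
      have hev : ∀ᶠ z in nhdsWithin (0:ℂ) {(0:ℂ)}ᶜ, g z ∈ closedBall (0:ℂ) 1 := by
        have hb1 : ball (0:ℂ) 1 ∈ nhdsWithin (0:ℂ) {(0:ℂ)}ᶜ :=
          nhdsWithin_le_nhds (ball_mem_nhds _ one_pos)
        filter_upwards [hb1, self_mem_nhdsWithin] with z hz hz0
        rw [hgf z hz0]
        exact ball_subset_closedBall (hfm ⟨hz, hz0⟩)
      exact Metric.isClosed_closedBall.mem_of_tendsto (hgct.continuousWithinAt) hev
    have hgm : MapsTo g (ball (0:ℂ) 1) (closedBall (0:ℂ) 1) := by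
      intro z hz
      rcases eq_or_ne z 0 with rfl | hz0
      · exact hg0mem
      · rw [hgf z hz0]
        exact ball_subset_closedBall (hfm ⟨hz, hz0⟩)
    -- Schwarz–Pick: |g 0| ≤ |a|
    have hφm : MapsTo φ (ball (0:ℂ) 1) (ball (0:ℂ) 1) := by
      intro z hz
      rw [mem_ball_zero_iff] at hz ⊢
      exact mob_mem haball hz
    have hφ0 : φ 0 = a := by simp [hφ]
    have hφa : φ a = 0 := by simp [hφ]
    have hhd : DifferentiableOn ℂ (g ∘ φ) (ball (0:ℂ) 1) :=
      hg.comp (mob_diff haball) hφm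
    have hg0 : ‖g 0‖ ≤ ‖a‖ := by
      apply le_of_forall_pos_le_add
      intro ε hε
      have hmaps : MapsTo (g ∘ φ) (ball (0:ℂ) 1) (ball ((g ∘ φ) 0) (1 + ε)) := by
        intro z hz
        have h1 : (g ∘ φ) z ∈ closedBall (0:ℂ) 1 := hgm (hφm hz)
        have h2 : (g ∘ φ) 0 = 0 := by simp [Function.comp, hφ0, hga]
        rw [h2, mem_ball_zero_iff]
        rw [mem_closedBall_zero_iff] at h1
        linarith
      have hS := Complex.dist_le_div_mul_dist_of_mapsTo_ball hhd (hmaps.mono_right ball_subset_closedBall)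
        (by rwa [mem_ball_zero_iff])
      have e1 : (g ∘ φ) a = g 0 := by simp [Function.comp, hφa]
      have e2 : (g ∘ φ) 0 = 0 := by simp [Function.comp, hφ0, hga]
      rw [e1, e2, dist_zero_right, dist_zero_right,
        div_one] at hS
      nlinarith [norm_nonneg (g 0)]
    -- g 0 is in ball 0 r ⊆ f '' puncturedDisk
    have hg0r : g 0 ∈ ball (0:ℂ) r := by
      rw [mem_ball_zero_iff]
      exact lt_of_le_of_lt hg0 hcon
    obtain ⟨z₀, hz₀D, hfz₀⟩ := hball hg0r
    have hz₀1 : ‖z₀‖ < 1 := habs z₀ hz₀D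
    have hz₀0 : z₀ ≠ 0 := hz₀D.2
    have hgz₀ : g z₀ = g 0 := by rw [hgf z₀ hz₀0, hfz₀]
    -- open mapping theorem
    have han : AnalyticOnNhd ℂ g (ball (0:ℂ) 1) := hg.analyticOnNhd isOpen_ball
    rcases han.is_constant_or_isOpen (convex_ball 0 1).isPreconnected with ⟨w, hw⟩ | hopen
    · -- g constant contradicts injectivity of f
      have h1 : f a = w := by
        rw [← hgf a hane]
        exact hw a (by rwa [mem_ball_zero_iff])
      have h2 : f (a/2) = w := by
        rw [← hgf (a/2) (by simpa using hane)]
        refine hw (a/2) ?_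
        rw [mem_ball_zero_iff, norm_div]
        simp only [Complex.norm_ofNat]
        linarith
      have haD : a ∈ puncturedDisk := hmemD a haball hane
      have ha2D : a/2 ∈ puncturedDisk := by
        refine hmemD (a/2) ?_ (by simpa using hane)
        rw [norm_div]
        simp only [Complex.norm_ofNat]
        linarith
      have heq : a = a / 2 := hfi haD ha2D (h1.trans h2.symm)
      exact hane (by linear_combination 2 * heq)
    · -- g open: derive contradiction with injectivity
      set δ : ℝ := min (‖z₀‖ / 2) ((1 - ‖z₀‖) / 2) with hδdef
      have hδpos : 0 < δ := lt_min (div_pos (norm_pos_iff.mpr hz₀0) two_pos) (by linarith)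
      have hδ1 : δ ≤ ‖z₀‖ / 2 := min_le_left _ _
      have hδ2 : δ ≤ (1 - ‖z₀‖) / 2 := min_le_right _ _
      have hUsub : ball (0:ℂ) δ ⊆ ball (0:ℂ) 1 := by
        apply ball_subset_ball
        linarith
      have hVsub : ball z₀ δ ⊆ ball (0:ℂ) 1 := by
        intro v hv
        rw [mem_ball] at hv ⊢
        have := dist_triangle v z₀ 0
        rw [dist_zero_right] at this ⊢
        rw [dist_comm] at this
        calc ‖v‖ ≤ dist v z₀ + ‖z₀‖ := by
              rw [dist_eq_norm]; exact (by
                have := norm_add_le (v - z₀) z₀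
                simpa using this)
          _ < δ + ‖z₀‖ := by linarith [hv]
          _ ≤ 1 := by linarith
      have hUopen : IsOpen (g '' ball (0:ℂ) δ) := hopen _ hUsub isOpen_ball
      have hVopen : IsOpen (g '' ball z₀ δ) := hopen _ hVsub isOpen_ball
      have hcU : g 0 ∈ g '' ball (0:ℂ) δ := ⟨0, mem_ball_self hδpos, rfl⟩
      have hcV : g 0 ∈ g '' ball z₀ δ := ⟨z₀, mem_ball_self hδpos, hgz₀⟩
      have hWopen : IsOpen (g '' ball (0:ℂ) δ ∩ g '' ball z₀ δ) := hUopen.inter hVopen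
      obtain ⟨ε, hεpos, hεsub⟩ := Metric.isOpen_iff.1 hWopen (g 0) ⟨hcU, hcV⟩
      have hwmem : g 0 + ε/2 ∈ g '' ball (0:ℂ) δ ∩ g '' ball z₀ δ := by
        apply hεsub
        rw [mem_ball, dist_eq_norm]
        simp only [add_sub_cancel_left]
        rw [norm_div, Complex.norm_real, Real.norm_eq_abs, Complex.norm_ofNat,
          abs_of_pos hεpos]
        linarith
      obtain ⟨⟨u, hu, hgu⟩, ⟨v, hv, hgv⟩⟩ := hwmem
      have hwne : g 0 + (ε:ℂ)/2 ≠ g 0 := by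
        intro h
        have h2 : (ε:ℂ)/2 = 0 := by linear_combination h
        have h3 : (ε:ℂ) = 0 := by linear_combination 2 * h2
        exact absurd (by exact_mod_cast h3) (ne_of_gt hεpos)
      have hu0 : u ≠ 0 := by
        rintro rfl
        exact hwne hgu.symm
      have hv0 : v ≠ 0 := by
        rintro rfl
        rw [mem_ball, dist_comm, dist_zero_right] at hv
        linarith
      have huv : u ≠ v := by
        rintro rfl
        rw [mem_ball, dist_zero_right] at hu
        rw [mem_ball] at hv
        have h4 : dist (0:ℂ) z₀ ≤ dist (0:ℂ) u + dist u z₀ := dist_triangle _ _ _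
        rw [dist_comm (0:ℂ) u, dist_zero_right] at h4
        rw [dist_comm (0:ℂ) z₀, dist_zero_right] at h4
        linarith
      have huD : u ∈ puncturedDisk := ⟨hUsub hu, hu0⟩
      have hvD : v ∈ puncturedDisk := ⟨hVsub hv, hv0⟩
      have : f u = f v := by
        rw [← hgf u hu0, ← hgf v hv0, hgu, hgv]
      exact huv (hfi huD hvD this)
end
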